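/- For θ ∈ [π/2, π], the double integral ∫₀^{2π} ∫₀^1 γ · 1_{γ sin²(θ − β) ≤ sin²(θ)} (1/(2π)) dγ dβ equals (π − θ)/π − (2 − cos(2θ)) sin(2θ)/(6π). -/

import Mathlib

open Real intervalIntegral MeasureTheory


lemma inner1 (a b c : ℝ) (ha : 0 ≤ a) (hab : a ≤ b) :
    ∫ γ in (0:ℝ)..1, γ * (if γ * a ≤ b then (1:ℝ) else 0) * c = c / 2 := by
  have h : ∀ γ ∈ Set.uIcc (0:ℝ) 1, γ * (if γ * a ≤ b then (1:ℝ) else 0) * c = γ * c := by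
    intro γ hγ
    rw [Set.uIcc_of_le (by norm_num : (0:ℝ) ≤ 1)] at hγ
    have h1 : γ * a ≤ b := le_trans (by nlinarith [hγ.1, hγ.2]) hab
    simp [h1]
  rw [intervalIntegral.integral_congr h, intervalIntegral.integral_mul_const, integral_id]
  ring

lemma inner2 (a b c : ℝ) (hb : 0 ≤ b) (hab : b ≤ a) (ha : 0 < a) :
    ∫ γ in (0:ℝ)..1, γ * (if γ * a ≤ b then (1:ℝ) else 0) * c = (b / a) ^ 2 / 2 * c := by
  have key : ∀ γ : ℝ, γ * (if γ * a ≤ b then (1:ℝ) else 0) * c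
      = Set.indicator {x : ℝ | x ≤ b / a} (fun γ => γ * c) γ := by
    intro γ
    by_cases h : γ ≤ b / a
    · have h1 : γ * a ≤ b := (le_div_iff₀ ha).1 h
      simp [Set.indicator, h, h1]
    · have h1 : ¬ γ * a ≤ b := fun hc => h ((le_div_iff₀ ha).2 hc)
      simp [Set.indicator, h, h1]
  simp_rw [key]
  rw [intervalIntegral.integral_indicator
      (⟨div_nonneg hb ha.le, (div_le_one ha).2 hab⟩ : b / a ∈ Set.Icc (0:ℝ) 1),
    intervalIntegral.integral_mul_const, integral_id]
  ring


lemma hasDerivAt_cotsum (θ β : ℝ) (h : Real.sin (θ - β) ≠ 0) :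
    HasDerivAt (fun b => Real.cos (θ - b) / Real.sin (θ - b)
        + (Real.cos (θ - b) / Real.sin (θ - b)) ^ 3 / 3)
      (1 / Real.sin (θ - β) ^ 4) β := by
  have hid : HasDerivAt (fun b : ℝ => θ - b) (-1) β := by
    simpa using (hasDerivAt_id β).const_sub θ
  have hs : HasDerivAt (fun b => Real.sin (θ - b)) (-Real.cos (θ - β)) β := by
    have := (Real.hasDerivAt_sin (θ - β)).comp β hid
    refine this.congr_deriv ?_; ring
  have hc : HasDerivAt (fun b => Real.cos (θ - b)) (Real.sin (θ - β)) β := by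
    have := (Real.hasDerivAt_cos (θ - β)).comp β hid
    refine this.congr_deriv ?_; ring
  have hq : HasDerivAt (fun b => Real.cos (θ - b) / Real.sin (θ - b))
      (1 / Real.sin (θ - β) ^ 2) β := by
    have h2 := hc.div hs h
    refine h2.congr_deriv ?_
    field_simp
    nlinarith [Real.sin_sq_add_cos_sq (θ - β)]
  have hq3 : HasDerivAt (fun b => (Real.cos (θ - b) / Real.sin (θ - b)) ^ 3 / 3)
      ((Real.cos (θ - β) / Real.sin (θ - β)) ^ 2 * (1 / Real.sin (θ - β) ^ 2)) β := by
    have h3 := (hq.pow 3).div_const 3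
    refine h3.congr_deriv ?_
    ring
  have hsum := hq.add hq3
  refine hsum.congr_deriv ?_
  field_simp
  nlinarith [Real.sin_sq_add_cos_sq (θ - β)]

lemma badB_intervalIntegrable (θ l r : ℝ) (hlr : l ≤ r)
    (hne : ∀ β ∈ Set.Icc l r, Real.sin (θ - β) ≠ 0) :
    IntervalIntegrable (fun β => (Real.sin θ ^ 2 / Real.sin (θ - β) ^ 2) ^ 2 / 2 * (1 / (2 * π)))
      volume l r := by
  apply ContinuousOn.intervalIntegrable
  rw [Set.uIcc_of_le hlr]
  have h1 : ContinuousOn (fun β : ℝ => Real.sin (θ - β)) (Set.Icc l r) :=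
    (Real.continuous_sin.comp (continuous_const.sub continuous_id)).continuousOn
  exact (((continuousOn_const.div (h1.pow 2) fun x hx => pow_ne_zero 2 (hne x hx)).pow 2).div_const
    2).mul continuousOn_const

lemma bad_val (θ l r : ℝ) (hlr : l ≤ r)
    (hne : ∀ β ∈ Set.Icc l r, Real.sin (θ - β) ≠ 0) :
    ∫ β in l..r, (Real.sin θ ^ 2 / Real.sin (θ - β) ^ 2) ^ 2 / 2 * (1 / (2 * π))
      = Real.sin θ ^ 4 / (4 * π) *
        ((Real.cos (θ - r) / Real.sin (θ - r) + (Real.cos (θ - r) / Real.sin (θ - r)) ^ 3 / 3)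
       - (Real.cos (θ - l) / Real.sin (θ - l) + (Real.cos (θ - l) / Real.sin (θ - l)) ^ 3 / 3)) := by
  have key := intervalIntegral.integral_eq_sub_of_hasDerivAt
    (f := fun b => Real.sin θ ^ 4 / (4 * π) *
      (Real.cos (θ - b) / Real.sin (θ - b) + (Real.cos (θ - b) / Real.sin (θ - b)) ^ 3 / 3))
    (f' := fun β => (Real.sin θ ^ 2 / Real.sin (θ - β) ^ 2) ^ 2 / 2 * (1 / (2 * π)))
    (fun x hx => by
      rw [Set.uIcc_of_le hlr] at hx
      have h := hne x hx
      have hd := (hasDerivAt_cotsum θ x h).const_mul (Real.sin θ ^ 4 / (4 * π))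
      refine hd.congr_deriv ?_
      have hπ : (π : ℝ) ≠ 0 := Real.pi_ne_zero
      field_simp
      ring)
    (badB_intervalIntegrable θ l r hlr hne)
  rw [key]
  ring

lemma II_congr {f g : ℝ → ℝ} {l r : ℝ} (hlr : l ≤ r)
    (h : Set.EqOn g f (Set.Icc l r)) (hg : IntervalIntegrable g volume l r) :
    IntervalIntegrable f volume l r := by
  rw [intervalIntegrable_iff_integrableOn_Ioc_of_le hlr] at hg ⊢
  exact hg.congr_fun (fun x hx => h (Set.Ioc_subset_Icc_self hx)) measurableSet_Ioc

lemma sinsq_le (θ x : ℝ) (hθ1 : π/2 ≤ θ) (hθ2 : θ ≤ π) (h1 : -(π - θ) ≤ x) (h2 : x ≤ π - θ) :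
    Real.sin x ^ 2 ≤ Real.sin θ ^ 2 := by
  have hpi := Real.pi_pos
  have hmem : x ∈ Set.Icc (-(π/2)) (π/2) := ⟨by linarith, by linarith⟩
  have hmem' : (π - θ) ∈ Set.Icc (-(π/2)) (π/2) := ⟨by linarith, by linarith⟩
  have hmem'' : (-(π - θ)) ∈ Set.Icc (-(π/2)) (π/2) := ⟨by linarith, by linarith⟩
  have hub : Real.sin x ≤ Real.sin (π - θ) :=
    Real.strictMonoOn_sin.monotoneOn hmem hmem' h2
  have hlb : Real.sin (-(π - θ)) ≤ Real.sin x :=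
    Real.strictMonoOn_sin.monotoneOn hmem'' hmem h1
  rw [Real.sin_pi_sub] at hub
  rw [Real.sin_neg, Real.sin_pi_sub] at hlb
  exact sq_le_sq' hlb hub

lemma sin_ge (θ x : ℝ) (hθ1 : π/2 ≤ θ) (hθ2 : θ ≤ π) (h1 : π - θ ≤ x) (h2 : x ≤ θ) :
    Real.sin θ ≤ Real.sin x := by
  have hpi := Real.pi_pos
  rcases le_total x (π/2) with hx | hx
  · have h := Real.strictMonoOn_sin.monotoneOn
      (⟨by linarith, by linarith⟩ : (π - θ) ∈ Set.Icc (-(π/2)) (π/2))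
      (⟨by linarith, hx⟩ : x ∈ Set.Icc (-(π/2)) (π/2)) h1
    rwa [Real.sin_pi_sub] at h
  · have h := Real.strictMonoOn_sin.monotoneOn
      (⟨by linarith, by linarith⟩ : (π - θ) ∈ Set.Icc (-(π/2)) (π/2))
      (⟨by linarith, by linarith⟩ : (π - x) ∈ Set.Icc (-(π/2)) (π/2)) (by linarith)
    rwa [Real.sin_pi_sub, Real.sin_pi_sub] at h

lemma final_arith (s c p t : ℝ) (hs : s ≠ 0) (hp : p ≠ 0) (pyth : s^2 + c^2 = 1) :
    s^4/(4*p) * ((-c)/s + ((-c)/s)^3/3 - (c/s + (c/s)^3/3)) + (p - (2*t - p)) * (1/(2*p)/2)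
    + s^4/(4*p) * (c/(-s) + (c/(-s))^3/3 - ((-c)/(-s) + ((-c)/(-s))^3/3)) + (2*p - 2*t) * (1/(2*p)/2)
    = (p - t)/p - (2 - (2*c^2 - 1)) * (2*s*c)/(6*p) := by
  simp only [neg_div, div_neg, neg_neg, div_pow]
  field_simp
  ring_nf
  linear_combination (-288*s*c) * pyth

/-- For `θ ∈ [π/2, π]`,
`∫₀^{2π} ∫₀^1 γ 1_{γ sin²(θ-β) ≤ sin²θ} (1/(2π)) dγ dβ = (π-θ)/π − (2 - cos 2θ) sin 2θ / (6π)`. -/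
theorem double_integral_indicator_second (θ : ℝ) (hθ : θ ∈ Set.Icc (π / 2) π) :
    ∫ β in (0 : ℝ)..(2 * π), ∫ γ in (0 : ℝ)..1,
      γ * (if γ * Real.sin (θ - β) ^ 2 ≤ Real.sin θ ^ 2 then (1 : ℝ) else 0) * (1 / (2 * π))
      = (π - θ) / π - (2 - Real.cos (2 * θ)) * Real.sin (2 * θ) / (6 * π) := by
  have hpi := Real.pi_pos
  have hπ0 : (π : ℝ) ≠ 0 := Real.pi_ne_zero
  obtain ⟨hθ1, hθ2⟩ := hθ
  rcases eq_or_lt_of_le hθ2 with hpe | hθlt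
  · -- θ = π
    subst hpe
    have hS : volume {x : ℝ | Real.sin (π - x) = 0} = 0 := by
      refine measure_mono_null ?_
        ((Set.countable_range (fun n : ℤ => π - n * π)).measure_zero _)
      intro x hx
      obtain ⟨n, hn⟩ := Real.sin_eq_zero_iff.1 hx
      exact ⟨n, by show π - ↑n * π = x; linarith⟩
    have hae : ∀ᵐ x, x ∈ Set.uIoc (0:ℝ) (2*π) →
        (∫ γ in (0:ℝ)..1, γ * (if γ * Real.sin (π - x) ^ 2 ≤ Real.sin π ^ 2 then (1:ℝ) else 0)
          * (1/(2*π))) = (fun _ : ℝ => (0:ℝ)) x := by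
      filter_upwards [measure_eq_zero_iff_ae_notMem.mp hS] with x hx _
      have hx' : Real.sin (π - x) ≠ 0 := hx
      have hpos : 0 < Real.sin (π - x) ^ 2 :=
        lt_of_le_of_ne (sq_nonneg _) (Ne.symm (pow_ne_zero 2 hx'))
      rw [inner2 _ _ _ (sq_nonneg _) (by rw [Real.sin_pi]; simpa using sq_nonneg (Real.sin (π - x))) hpos]
      rw [Real.sin_pi]
      norm_num
    rw [intervalIntegral.integral_congr_ae hae]
    simp [Real.sin_two_pi]
  · -- θ < π
    have hs : 0 < Real.sin θ := Real.sin_pos_of_pos_of_lt_pi (by linarith) hθlt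
    have b0 : (0:ℝ) ≤ 2*θ - π := by linarith
    have b1 : 2*θ - π ≤ π := by linarith
    have b2 : π ≤ 2*θ := by linarith
    have b3 : 2*θ ≤ 2*π := by linarith
    set f : ℝ → ℝ := fun β => ∫ γ in (0:ℝ)..1,
      γ * (if γ * Real.sin (θ - β) ^ 2 ≤ Real.sin θ ^ 2 then (1:ℝ) else 0) * (1/(2*π)) with hf
    have hne1 : ∀ β ∈ Set.Icc (0:ℝ) (2*θ-π), Real.sin (θ - β) ≠ 0 := fun β hβ =>
      ne_of_gt (lt_of_lt_of_le hs
        (sin_ge θ (θ-β) hθ1 hθ2 (by linarith [hβ.2]) (by linarith [hβ.1])))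
    have hne2 : ∀ β ∈ Set.Icc π (2*θ), Real.sin (θ - β) ≠ 0 := by
      intro β hβ
      have hge := sin_ge θ (β-θ) hθ1 hθ2 (by linarith [hβ.1]) (by linarith [hβ.2])
      have hr : Real.sin (θ - β) = -Real.sin (β - θ) := by
        rw [show θ - β = -(β-θ) by ring, Real.sin_neg]
      rw [hr]
      exact neg_ne_zero.2 (ne_of_gt (lt_of_lt_of_le hs hge))
    have hbad1 : Set.EqOn f
        (fun β => (Real.sin θ ^ 2 / Real.sin (θ - β) ^ 2) ^ 2 / 2 * (1/(2*π)))
        (Set.Icc 0 (2*θ-π)) := by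
      intro β hβ
      have hge := sin_ge θ (θ-β) hθ1 hθ2 (by linarith [hβ.2]) (by linarith [hβ.1])
      have hpos : 0 < Real.sin (θ - β) := lt_of_lt_of_le hs hge
      have hab : Real.sin θ ^ 2 ≤ Real.sin (θ-β) ^ 2 := pow_le_pow_left₀ hs.le hge 2
      exact inner2 _ _ _ (sq_nonneg _) hab (pow_pos hpos 2)
    have hbad2 : Set.EqOn f
        (fun β => (Real.sin θ ^ 2 / Real.sin (θ - β) ^ 2) ^ 2 / 2 * (1/(2*π)))
        (Set.Icc π (2*θ)) := by
      intro β hβ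
      have hge := sin_ge θ (β-θ) hθ1 hθ2 (by linarith [hβ.1]) (by linarith [hβ.2])
      have hr : Real.sin (θ - β) ^ 2 = Real.sin (β - θ) ^ 2 := by
        rw [show θ - β = -(β-θ) by ring, Real.sin_neg, neg_sq]
      have hab : Real.sin θ ^ 2 ≤ Real.sin (θ-β) ^ 2 := by
        rw [hr]; exact pow_le_pow_left₀ hs.le hge 2
      have hpos : 0 < Real.sin (θ-β) ^ 2 := by
        rw [hr]; exact pow_pos (lt_of_lt_of_le hs hge) 2
      exact inner2 _ _ _ (sq_nonneg _) hab hpos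
    have hgood1 : Set.EqOn f (fun _ => (1/(2*π))/2) (Set.Icc (2*θ-π) π) := by
      intro β hβ
      have hle : Real.sin (θ - β) ^ 2 ≤ Real.sin θ ^ 2 :=
        sinsq_le θ (θ-β) hθ1 hθ2 (by linarith [hβ.2]) (by linarith [hβ.1])
      exact inner1 _ _ _ (sq_nonneg _) hle
    have hgood2 : Set.EqOn f (fun _ => (1/(2*π))/2) (Set.Icc (2*θ) (2*π)) := by
      intro β hβ
      have hr : Real.sin (β - θ - π) = Real.sin (θ - β) := by
        rw [show β - θ - π = -(θ-β) - π by ring, Real.sin_sub_pi, Real.sin_neg, neg_neg]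
      have hle := sinsq_le θ (β-θ-π) hθ1 hθ2 (by linarith [hβ.1]) (by linarith [hβ.2])
      rw [hr] at hle
      exact inner1 _ _ _ (sq_nonneg _) hle
    have hI1 : IntervalIntegrable f volume 0 (2*θ-π) :=
      II_congr b0 hbad1.symm (badB_intervalIntegrable θ 0 (2*θ-π) b0 hne1)
    have hI2 : IntervalIntegrable f volume (2*θ-π) π :=
      II_congr b1 hgood1.symm intervalIntegrable_const
    have hI3 : IntervalIntegrable f volume π (2*θ) :=
      II_congr b2 hbad2.symm (badB_intervalIntegrable θ π (2*θ) b2 hne2)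
    have hI4 : IntervalIntegrable f volume (2*θ) (2*π) :=
      II_congr b3 hgood2.symm intervalIntegrable_const
    have split : ∫ β in (0:ℝ)..(2*π), f β
        = ((∫ β in (0:ℝ)..(2*θ-π), f β) + (∫ β in (2*θ-π)..π, f β))
          + (∫ β in π..(2*θ), f β) + (∫ β in (2*θ)..(2*π), f β) := by
      rw [intervalIntegral.integral_add_adjacent_intervals hI1 hI2,
        intervalIntegral.integral_add_adjacent_intervals (hI1.trans hI2) hI3,
        intervalIntegral.integral_add_adjacent_intervals ((hI1.trans hI2).trans hI3) hI4]
    rw [show (∫ β in (0:ℝ)..(2*π), ∫ γ in (0:ℝ)..1,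
        γ * (if γ * Real.sin (θ - β) ^ 2 ≤ Real.sin θ ^ 2 then (1:ℝ) else 0) * (1/(2*π)))
        = ∫ β in (0:ℝ)..(2*π), f β from rfl, split]
    rw [intervalIntegral.integral_congr (by rwa [Set.uIcc_of_le b0] : Set.EqOn f _ (Set.uIcc 0 (2*θ-π))),
      intervalIntegral.integral_congr (by rwa [Set.uIcc_of_le b1] : Set.EqOn f _ (Set.uIcc (2*θ-π) π)),
      intervalIntegral.integral_congr (by rwa [Set.uIcc_of_le b2] : Set.EqOn f _ (Set.uIcc π (2*θ))),
      intervalIntegral.integral_congr (by rwa [Set.uIcc_of_le b3] : Set.EqOn f _ (Set.uIcc (2*θ) (2*π)))]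
    rw [bad_val θ 0 (2*θ-π) b0 hne1, bad_val θ π (2*θ) b2 hne2,
      intervalIntegral.integral_const, intervalIntegral.integral_const, smul_eq_mul, smul_eq_mul]
    rw [show θ - (2*θ-π) = π - θ by ring, show θ - 0 = θ by ring,
      show θ - 2*θ = -θ by ring, show θ - π = -(π-θ) by ring]
    rw [Real.cos_pi_sub, Real.sin_pi_sub, Real.cos_neg, Real.sin_neg, Real.cos_neg,
      Real.sin_neg, Real.cos_pi_sub, Real.sin_pi_sub]
    rw [Real.cos_two_mul, Real.sin_two_mul]
    have hsne : Real.sin θ ≠ 0 := ne_of_gt hs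
    have pyth := Real.sin_sq_add_cos_sq θ
    exact final_arith (Real.sin θ) (Real.cos θ) π θ hsne hπ0 pyth
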